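/- Let G be a closed subgroup of S∞ having only countably many open subgroups. Then the map Φ : G → F(M(G)) defined by Φ(g) = {A : A is an open coset of G with g ∈ A} is a group isomorphism and a homeomorphism from G onto the group of full filters F(M(G)) (with the filter product and the topology generated by the sets Â), and its inverse sends a full filter x to the unique g ∈ G with ⋂x = {g}. -/

import Mathlib

/-- `S∞`: the group of permutations of `ℕ` with the topology of pointwise convergence,
induced by `σ ↦ (σ, σ⁻¹)` from the product topology on `(ℕ → ℕ) × (ℕ → ℕ)`. -/
instance permTop : TopologicalSpace (Equiv.Perm ℕ) :=
  TopologicalSpace.induced (fun σ => ((⇑σ, ⇑σ.symm) : (ℕ → ℕ) × (ℕ → ℕ))) inferInstance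

namespace CoarseS

variable (G : Subgroup (Equiv.Perm ℕ))

/-- `A` is an open coset of `G`: a left coset `aU` of an open subgroup `U` of `G`. -/
def IsOpenCoset (A : Set G) : Prop :=
  ∃ U : Subgroup G, IsOpen (U : Set G) ∧ ∃ a : G, A = (fun u => a * u) '' (U : Set G)

/-- The coarse group `M(G)`: the collection of open cosets of `G` (the ternary relation
`AB ⊑ C`, i.e. `{ab : a ∈ A, b ∈ B} ⊆ C`, is expressed directly below). -/
abbrev MG : Type := {A : Set G // IsOpenCoset G A}

/-- A full filter on `M(G)`: upward closed and downward directed with respect to inclusion,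
containing a left coset and a right coset of every open subgroup of `G`. -/
def IsFullFilter (x : Set (MG G)) : Prop :=
  (∀ A ∈ x, ∀ B : MG G, A.1 ⊆ B.1 → B ∈ x) ∧
  (∀ A ∈ x, ∀ B ∈ x, ∃ C ∈ x, C.1 ⊆ A.1 ∧ C.1 ⊆ B.1) ∧
  (∀ U : Subgroup G, IsOpen (U : Set G) →
    (∃ A ∈ x, ∃ a : G, A.1 = (fun u => a * u) '' (U : Set G)) ∧
    (∃ A ∈ x, ∃ a : G, A.1 = (fun u => u * a) '' (U : Set G)))

/-- `F(M(G))`: the set of full filters on `M(G)`. -/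
abbrev FFG : Type := {x : Set (MG G) // IsFullFilter G x}

/-- The product of filters: `x·y = {C : ∃ A ∈ x, B ∈ y, AB ⊆ C}`. -/
def fprodG (x y : Set (MG G)) : Set (MG G) :=
  {C | ∃ A ∈ x, ∃ B ∈ y, ∀ a ∈ A.1, ∀ b ∈ B.1, a * b ∈ C.1}

/-- The topology on `F(M(G))` generated by the sets `Â = {x : A ∈ x}`. -/
def ffTopG : TopologicalSpace (FFG G) :=
  TopologicalSpace.generateFrom {S | ∃ A : MG G, S = {x : FFG G | A ∈ x.1}}

/-! Basic continuity lemmas for `permTop`. -/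

lemma contPerm_emb : Continuous fun σ : Equiv.Perm ℕ =>
    ((⇑σ, ⇑σ.symm) : (ℕ → ℕ) × (ℕ → ℕ)) :=
  continuous_induced_dom

lemma contPerm_coe : Continuous fun σ : Equiv.Perm ℕ => (⇑σ : ℕ → ℕ) :=
  continuous_fst.comp contPerm_emb

lemma contPerm_symm : Continuous fun σ : Equiv.Perm ℕ => (⇑σ.symm : ℕ → ℕ) :=
  continuous_snd.comp contPerm_emb

lemma contPerm_mulLeft (c : Equiv.Perm ℕ) : Continuous fun σ : Equiv.Perm ℕ => c * σ := by
  apply continuous_induced_rng.2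
  refine Continuous.prodMk ?_ ?_
  · exact continuous_pi fun n =>
      (continuous_of_discreteTopology (f := ⇑c)).comp ((continuous_apply n).comp contPerm_coe)
  · exact continuous_pi fun n => (continuous_apply (c.symm n)).comp contPerm_symm

lemma contPerm_mulRight (c : Equiv.Perm ℕ) : Continuous fun σ : Equiv.Perm ℕ => σ * c := by
  apply continuous_induced_rng.2
  refine Continuous.prodMk ?_ ?_
  · exact continuous_pi fun n => (continuous_apply (c n)).comp contPerm_coe
  · exact continuous_pi fun n =>
      (continuous_of_discreteTopology (f := ⇑c.symm)).comp ((continuous_apply n).comp contPerm_symm)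

lemma isOpen_cyl (n : ℕ) (g : ℕ → ℕ) : IsOpen {f : ℕ → ℕ | ∀ k ≤ n, f k = g k} := by
  have : {f : ℕ → ℕ | ∀ k ≤ n, f k = g k} =
      ⋂ k ∈ Finset.range (n+1), {f : ℕ → ℕ | f k = g k} := by
    ext f; simp [Nat.lt_succ_iff]
  rw [this]
  refine isOpen_biInter_finset fun k _ => ?_
  have : {f : ℕ → ℕ | f k = g k} = (fun f : ℕ → ℕ => f k) ⁻¹' {g k} := rfl
  rw [this]
  exact (continuous_apply k).isOpen_preimage _ (isOpen_discrete _)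

lemma exists_W_subset {O : Set (Equiv.Perm ℕ)} (hO : IsOpen O) {g : Equiv.Perm ℕ} (hg : g ∈ O) :
    ∃ n, ∀ h : Equiv.Perm ℕ, (∀ k ≤ n, h k = g k) → (∀ k ≤ n, h.symm k = g.symm k) → h ∈ O := by
  obtain ⟨O', hO', rfl⟩ := isOpen_induced_iff.1 hO
  obtain ⟨u, v, hu, hv, hgu, hgv, huv⟩ := isOpen_prod_iff.1 hO' _ _ hg
  obtain ⟨I, U, hU, hIU⟩ := isOpen_pi_iff.1 hu _ hgu
  obtain ⟨J, V, hV, hJV⟩ := isOpen_pi_iff.1 hv _ hgv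
  refine ⟨(I.sup id) + (J.sup id), fun h h1 h2 => ?_⟩
  apply huv
  constructor
  · apply hIU
    intro i hi
    have hb := h1 i (le_trans (Finset.le_sup (f := id) (Finset.mem_coe.1 hi))
      (Nat.le_add_right _ _))
    show h i ∈ U i
    rw [hb]
    exact (hU i (Finset.mem_coe.1 hi)).2
  · apply hJV
    intro i hi
    have hb := h2 i (le_trans (Finset.le_sup (f := id) (Finset.mem_coe.1 hi))
      (Nat.le_add_left _ _))
    show h.symm i ∈ V i
    rw [hb]
    exact (hV i (Finset.mem_coe.1 hi)).2

/-! Continuity lemmas on `G`. -/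

lemma contG_mulLeft (c : G) : Continuous fun u : G => c * u := by
  have h1 : Continuous fun u : G => ((c : Equiv.Perm ℕ) * (u : Equiv.Perm ℕ)) :=
    (contPerm_mulLeft (c : Equiv.Perm ℕ)).comp continuous_subtype_val
  exact h1.subtype_mk _

lemma contG_mulRight (c : G) : Continuous fun u : G => u * c := by
  have h1 : Continuous fun u : G => ((u : Equiv.Perm ℕ) * (c : Equiv.Perm ℕ)) :=
    (contPerm_mulRight (c : Equiv.Perm ℕ)).comp continuous_subtype_val
  exact h1.subtype_mk _

lemma contG_conj (c : G) : Continuous fun u : G => c * u * c⁻¹ :=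
  (contG_mulRight G c⁻¹).comp (contG_mulLeft G c)

/-! The basic open subgroups `Vsub n` (pointwise stabilizers of `{0,...,n}`). -/

lemma fix_symm {π : Equiv.Perm ℕ} {n : ℕ} (h : ∀ k ≤ n, π k = k) :
    ∀ k ≤ n, π.symm k = k := fun k hk => (Equiv.symm_apply_eq π).2 (h k hk).symm

def Vsub (n : ℕ) : Subgroup G where
  carrier := {u : G | ∀ k ≤ n, (u : Equiv.Perm ℕ) k = k}
  one_mem' := fun k _ => rfl
  mul_mem' := by
    intro a b ha hb k hk
    have : ((a * b : G) : Equiv.Perm ℕ) k = (a : Equiv.Perm ℕ) ((b : Equiv.Perm ℕ) k) := rfl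
    rw [this, hb k hk, ha k hk]
  inv_mem' := by
    intro a ha k hk
    have : ((a⁻¹ : G) : Equiv.Perm ℕ) k = ((a : Equiv.Perm ℕ)).symm k := rfl
    rw [this]
    exact fix_symm ha k hk

lemma mem_Vsub {n : ℕ} {u : G} : u ∈ Vsub G n ↔ ∀ k ≤ n, (u : Equiv.Perm ℕ) k = k := Iff.rfl

lemma isOpen_fixSet (n : ℕ) : IsOpen {σ : Equiv.Perm ℕ | ∀ k ≤ n, σ k = k} := by
  have : {σ : Equiv.Perm ℕ | ∀ k ≤ n, σ k = k} =
      (fun σ : Equiv.Perm ℕ => ((⇑σ, ⇑σ.symm) : (ℕ → ℕ) × (ℕ → ℕ))) ⁻¹'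
        ({f | ∀ k ≤ n, f k = k} ×ˢ Set.univ) := by
    ext σ; simp [Set.mem_prod]
  rw [this]
  exact isOpen_induced ((isOpen_cyl n id).prod isOpen_univ)

lemma Vsub_isOpen (n : ℕ) : IsOpen ((Vsub G n : Subgroup G) : Set G) := by
  have : ((Vsub G n : Subgroup G) : Set G) =
      (Subtype.val : G → Equiv.Perm ℕ) ⁻¹' {σ : Equiv.Perm ℕ | ∀ k ≤ n, σ k = k} := rfl
  rw [this]
  exact (isOpen_fixSet n).preimage continuous_subtype_val

/-! Cosets. -/

lemma coset_isOpen {U : Subgroup G} (hU : IsOpen (U : Set G)) (c : G) :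
    IsOpen ((fun u => c * u) '' (U : Set G)) := by
  have : (fun u => c * u) '' (U : Set G) = (fun h : G => c⁻¹ * h) ⁻¹' (U : Set G) := by
    ext h
    constructor
    · rintro ⟨u, hu, rfl⟩; simpa using hu
    · intro hh; exact ⟨c⁻¹ * h, hh, by group⟩
  rw [this]
  exact hU.preimage (contG_mulLeft G c⁻¹)

lemma coset_mul_mem {U : Subgroup G} {c g u : G} (hg : g ∈ (fun u => c * u) '' (U : Set G))
    (hu : u ∈ U) : g * u ∈ (fun u => c * u) '' (U : Set G) := by
  obtain ⟨w, hw, rfl⟩ := hg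
  exact ⟨w * u, mul_mem hw hu, (mul_assoc _ _ _).symm⟩

/-! Conjugate subgroups. -/

def conjSub (c : G) (U : Subgroup G) : Subgroup G :=
  Subgroup.map (MulAut.conj c).toMonoidHom U

lemma mem_conjSub {c : G} {U : Subgroup G} {v : G} :
    v ∈ conjSub G c U ↔ c⁻¹ * v * c ∈ U := by
  constructor
  · rintro ⟨u, hu, rfl⟩
    simpa [MulAut.conj_apply, mul_assoc] using hu
  · intro h
    exact ⟨c⁻¹ * v * c, h, by simp [MulAut.conj_apply]; group⟩

lemma conjSub_isOpen {c : G} {U : Subgroup G} (hU : IsOpen (U : Set G)) :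
    IsOpen ((conjSub G c U : Subgroup G) : Set G) := by
  have : ((conjSub G c U : Subgroup G) : Set G) =
      (fun v : G => c⁻¹ * v * c) ⁻¹' (U : Set G) := by
    ext v; exact mem_conjSub G
  rw [this]
  exact hU.preimage ((contG_mulRight G c).comp (contG_mulLeft G c⁻¹))

lemma MG_nonempty (A : MG G) : A.1.Nonempty := by
  obtain ⟨U, hU, c, hc⟩ := A.2
  exact ⟨c, hc ▸ ⟨1, one_mem U, mul_one c⟩⟩

/-! The map `Φ`. -/

def PhiSet (g : G) : Set (MG G) := {A | g ∈ A.1}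

lemma PhiFull (g : G) : IsFullFilter G (PhiSet G g) := by
  refine ⟨fun A hA B hAB => hAB hA, ?_, ?_⟩
  · rintro A hA B hB
    obtain ⟨U, hU, a, hAa⟩ := A.2
    obtain ⟨V, hV, b, hBb⟩ := B.2
    have hUV : IsOpen ((U ⊓ V : Subgroup G) : Set G) := by
      have : ((U ⊓ V : Subgroup G) : Set G) = (U : Set G) ∩ (V : Set G) := rfl
      rw [this]; exact hU.inter hV
    refine ⟨⟨(fun u => g * u) '' ((U ⊓ V : Subgroup G) : Set G), U ⊓ V, hUV, g, rfl⟩,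
      ⟨1, one_mem _, mul_one g⟩, ?_, ?_⟩
    · rintro c ⟨u, hu, rfl⟩
      have hA' : g ∈ A.1 := hA
      rw [hAa] at hA'
      show g * u ∈ A.1
      rw [hAa]
      exact coset_mul_mem G hA' hu.1
    · rintro c ⟨u, hu, rfl⟩
      have hB' : g ∈ B.1 := hB
      rw [hBb] at hB'
      show g * u ∈ B.1
      rw [hBb]
      exact coset_mul_mem G hB' hu.2
  · intro U hU
    constructor
    · exact ⟨⟨(fun u => g * u) '' (U : Set G), U, hU, g, rfl⟩,
        ⟨1, one_mem U, mul_one g⟩, g, rfl⟩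
    · have hset : (fun u => g * u) '' ((conjSub G g⁻¹ U : Subgroup G) : Set G) =
          (fun u => u * g) '' (U : Set G) := by
        ext c
        constructor
        · rintro ⟨v, hv, rfl⟩
          rw [SetLike.mem_coe, mem_conjSub G] at hv
          refine ⟨g * v * g⁻¹, by simpa [mul_assoc] using hv, by group⟩
        · rintro ⟨u, hu, rfl⟩
          refine ⟨g⁻¹ * u * g, ?_, by group⟩
          rw [SetLike.mem_coe, mem_conjSub G]
          simpa [mul_assoc] using hu
      refine ⟨⟨(fun u => u * g) '' (U : Set G),
        conjSub G g⁻¹ U, conjSub_isOpen G hU, g, hset.symm⟩,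
        ⟨1, one_mem U, one_mul g⟩, g, rfl⟩

def Phi (g : G) : FFG G := ⟨PhiSet G g, PhiFull G g⟩

/-! Open subgroups contain some `Vsub n`, and open sets contain coset neighborhoods. -/

lemma subgroup_contains_Vsub {U : Subgroup G} (hU : IsOpen (U : Set G)) :
    ∃ n, ∀ u : G, (∀ k ≤ n, (u : Equiv.Perm ℕ) k = k) → u ∈ U := by
  obtain ⟨T, hT, hUT⟩ := isOpen_induced_iff.1 hU
  have h1T : ((1 : G) : Equiv.Perm ℕ) ∈ T := by
    have h : (1 : G) ∈ U := one_mem U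
    rw [← SetLike.mem_coe, ← hUT] at h
    exact h
  obtain ⟨n, hn⟩ := exists_W_subset hT h1T
  refine ⟨n, fun u hu => ?_⟩
  have : (u : Equiv.Perm ℕ) ∈ T := by
    apply hn
    · intro k hk; simpa using hu k hk
    · intro k hk
      have := fix_symm hu k hk
      exact this
  rw [← SetLike.mem_coe, ← hUT]
  exact this

lemma open_contains_coset {O : Set G} (hO : IsOpen O) {g : G} (hg : g ∈ O) :
    ∃ n, (fun u => g * u) '' ((Vsub G n : Subgroup G) : Set G) ⊆ O := by
  obtain ⟨T, hT, hOT⟩ := isOpen_induced_iff.1 hO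
  have hgT : (g : Equiv.Perm ℕ) ∈ T := by rw [← hOT] at hg; exact hg
  obtain ⟨n, hn⟩ := exists_W_subset hT hgT
  set m := n + (Finset.range (n+1)).sup (fun k => (g : Equiv.Perm ℕ).symm k) with hm
  refine ⟨m, ?_⟩
  rintro c ⟨u, hu, rfl⟩
  have hu' : ∀ k ≤ m, (u : Equiv.Perm ℕ) k = k := hu
  show g * u ∈ O
  rw [← hOT]
  show ((g * u : G) : Equiv.Perm ℕ) ∈ T
  have hcoe : ((g * u : G) : Equiv.Perm ℕ) = (g : Equiv.Perm ℕ) * (u : Equiv.Perm ℕ) := rfl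
  rw [hcoe]
  apply hn
  · intro k hk
    have : (u : Equiv.Perm ℕ) k = k := hu' k (le_trans hk (Nat.le_add_right _ _))
    show (g : Equiv.Perm ℕ) ((u : Equiv.Perm ℕ) k) = (g : Equiv.Perm ℕ) k
    rw [this]
  · intro k hk
    have hsymm : ((g : Equiv.Perm ℕ) * (u : Equiv.Perm ℕ)).symm k =
        (u : Equiv.Perm ℕ).symm ((g : Equiv.Perm ℕ).symm k) := rfl
    rw [hsymm]
    have hle : (g : Equiv.Perm ℕ).symm k ≤ m := by
      have : (g : Equiv.Perm ℕ).symm k ≤ (Finset.range (n+1)).sup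
          (fun k => (g : Equiv.Perm ℕ).symm k) :=
        Finset.le_sup (Finset.mem_range.2 (Nat.lt_succ_of_le hk))
      omega
    exact fix_symm hu' _ hle

/-- The canonical basic cosets as elements of `MG`. -/
def cosetMG (c : G) (n : ℕ) : MG G :=
  ⟨(fun u => c * u) '' ((Vsub G n : Subgroup G) : Set G), Vsub G n, Vsub_isOpen G n, c, rfl⟩

lemma cosetMG_mem_Phi (c : G) (n : ℕ) : cosetMG G c n ∈ (Phi G c).1 :=
  ⟨1, one_mem _, mul_one c⟩

lemma leftCoset_Vsub_apply {c : G} {n : ℕ} {h : G}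
    (hh : h ∈ (fun u => c * u) '' ((Vsub G n : Subgroup G) : Set G)) :
    ∀ k ≤ n, (h : Equiv.Perm ℕ) k = (c : Equiv.Perm ℕ) k := by
  obtain ⟨u, hu, rfl⟩ := hh
  intro k hk
  show (c : Equiv.Perm ℕ) ((u : Equiv.Perm ℕ) k) = (c : Equiv.Perm ℕ) k
  rw [hu k hk]

lemma rightCoset_Vsub_symm {c : G} {n : ℕ} {h : G}
    (hh : h ∈ (fun u => u * c) '' ((Vsub G n : Subgroup G) : Set G)) :
    ∀ k ≤ n, ((h : Equiv.Perm ℕ)).symm k = ((c : Equiv.Perm ℕ)).symm k := by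
  obtain ⟨u, hu, rfl⟩ := hh
  intro k hk
  show ((u : Equiv.Perm ℕ) * (c : Equiv.Perm ℕ)).symm k = (c : Equiv.Perm ℕ).symm k
  have : ((u : Equiv.Perm ℕ) * (c : Equiv.Perm ℕ)).symm k =
      (c : Equiv.Perm ℕ).symm ((u : Equiv.Perm ℕ).symm k) := rfl
  rw [this, fix_symm hu k hk]

lemma Phi_surj (hclosed : IsClosed (G : Set (Equiv.Perm ℕ))) (x : FFG G) :
    ∃ g : G, Phi G g = x := by
  obtain ⟨hup, hdir, hful⟩ := x.2
  choose A hA a hAa using fun n => (hful (Vsub G n) (Vsub_isOpen G n)).1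
  choose B hB b hBb using fun n => (hful (Vsub G n) (Vsub_isOpen G n)).2
  set f : ℕ → ℕ := fun n => ((a n : G) : Equiv.Perm ℕ) n with hf
  set g' : ℕ → ℕ := fun n => ((b n : G) : Equiv.Perm ℕ).symm n with hg'
  have memA : ∀ n (h : G), h ∈ (A n).1 → ∀ k ≤ n,
      (h : Equiv.Perm ℕ) k = ((a n : G) : Equiv.Perm ℕ) k := by
    intro n h hh k hk
    rw [hAa n] at hh
    exact leftCoset_Vsub_apply G hh k hk
  have memB : ∀ n (h : G), h ∈ (B n).1 → ∀ k ≤ n,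
      ((h : Equiv.Perm ℕ)).symm k = ((b n : G) : Equiv.Perm ℕ).symm k := by
    intro n h hh k hk
    rw [hBb n] at hh
    exact rightCoset_Vsub_symm G hh k hk
  have L0 : ∀ n (h : G), h ∈ (A n).1 → ∀ k ≤ n, (h : Equiv.Perm ℕ) k = f k := by
    intro n h hh k hk
    obtain ⟨D, hD, hD1, hD2⟩ := hdir _ (hA n) _ (hA k)
    obtain ⟨h', hh'⟩ := MG_nonempty G D
    have e1 := memA n h hh k hk
    have e2 := memA n h' (hD1 hh') k hk
    have e3 := memA k h' (hD2 hh') k le_rfl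
    rw [e1, ← e2, e3]
  have M0 : ∀ n (h : G), h ∈ (B n).1 → ∀ k ≤ n, ((h : Equiv.Perm ℕ)).symm k = g' k := by
    intro n h hh k hk
    obtain ⟨D, hD, hD1, hD2⟩ := hdir _ (hB n) _ (hB k)
    obtain ⟨h', hh'⟩ := MG_nonempty G D
    have e1 := memB n h hh k hk
    have e2 := memB n h' (hD1 hh') k hk
    have e3 := memB k h' (hD2 hh') k le_rfl
    rw [e1, ← e2, e3]
  have L1 : ∀ C ∈ x.1, ∀ n, ∃ h : G, h ∈ C.1 ∧
      (∀ k ≤ n, (h : Equiv.Perm ℕ) k = f k) ∧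
      (∀ k ≤ n, ((h : Equiv.Perm ℕ)).symm k = g' k) := by
    intro C hC n
    obtain ⟨D1, hD1, hs1, hs2⟩ := hdir _ hC _ (hA n)
    obtain ⟨D, hD, ht1, ht2⟩ := hdir _ hD1 _ (hB n)
    obtain ⟨h, hh⟩ := MG_nonempty G D
    exact ⟨h, hs1 (ht1 hh), fun k hk => L0 n h (hs2 (ht1 hh)) k hk,
      fun k hk => M0 n h (ht2 hh) k hk⟩
  have lg : ∀ k, g' (f k) = k := by
    intro k
    obtain ⟨h, _, h1, h2⟩ := L1 _ (hA 0) (max k (f k))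
    have e1 := h1 k (le_max_left _ _)
    have e2 := h2 (f k) (le_max_right _ _)
    rw [← e2, ← e1, Equiv.symm_apply_apply]
  have lf : ∀ k, f (g' k) = k := by
    intro k
    obtain ⟨h, _, h1, h2⟩ := L1 _ (hA 0) (max k (g' k))
    have e1 := h1 (g' k) (le_max_right _ _)
    have e2 := h2 k (le_max_left _ _)
    rw [← e1, ← e2, Equiv.apply_symm_apply]
  set σ : Equiv.Perm ℕ := ⟨f, g', lg, lf⟩ with hσ
  have hσapp : ∀ k, σ k = f k := fun k => rfl
  have hσsymm : ∀ k, σ.symm k = g' k := fun k => rfl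
  have hσG : σ ∈ (G : Set (Equiv.Perm ℕ)) := by
    rw [← hclosed.closure_eq]
    rw [mem_closure_iff]
    intro O hO hσO
    obtain ⟨n, hn⟩ := exists_W_subset hO hσO
    obtain ⟨h, _, h1, h2⟩ := L1 _ (hA 0) n
    exact ⟨(h : Equiv.Perm ℕ), hn _ (fun k hk => (h1 k hk).trans (hσapp k).symm)
      (fun k hk => (h2 k hk).trans (hσsymm k).symm), h.2⟩
  refine ⟨⟨σ, hσG⟩, ?_⟩
  set σG : G := ⟨σ, hσG⟩ with hσGdef
  apply Subtype.ext
  apply Set.eq_of_subset_of_subset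
  · -- Phi σG ⊆ x : every open coset containing σG is in x
    intro C hC
    have hCmem : σG ∈ C.1 := hC
    obtain ⟨U, hU, c, hCc⟩ := C.2
    obtain ⟨n, hn⟩ := subgroup_contains_Vsub G hU
    -- A n ⊆ C
    apply hup _ (hA n)
    intro h hh
    have h1 : ∀ k ≤ n, (h : Equiv.Perm ℕ) k = f k := fun k hk => L0 n h hh k hk
    rw [hCc] at hCmem ⊢
    have huU : σG⁻¹ * h ∈ U := by
      apply hn
      intro k hk
      have : ((σG⁻¹ * h : G) : Equiv.Perm ℕ) k = σ.symm ((h : Equiv.Perm ℕ) k) := rfl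
      rw [this, h1 k hk, ← hσapp k, Equiv.symm_apply_apply]
    have : h = σG * (σG⁻¹ * h) := by group
    rw [this]
    exact coset_mul_mem G hCmem huU
  · -- x ⊆ Phi σG : σG belongs to every member of x
    intro C hC
    obtain ⟨U, hU, c, hCc⟩ := C.2
    obtain ⟨n, hn⟩ := subgroup_contains_Vsub G hU
    obtain ⟨h, hh, h1, h2⟩ := L1 _ hC n
    show σG ∈ C.1
    rw [hCc] at hh ⊢
    have huU : h⁻¹ * σG ∈ U := by
      apply hn
      intro k hk
      have : ((h⁻¹ * σG : G) : Equiv.Perm ℕ) k = ((h : Equiv.Perm ℕ)).symm (σ k) := rfl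
      rw [this, hσapp k, ← h1 k hk, Equiv.symm_apply_apply]
    have : σG = h * (h⁻¹ * σG) := by group
    rw [this]
    exact coset_mul_mem G hh huU

lemma Phi_iInter (g : G) : (⋂ A ∈ (Phi G g).1, (A.1 : Set G)) = {g} := by
  apply Set.eq_of_subset_of_subset
  · intro h hh
    have key : ∀ n : ℕ, (h : Equiv.Perm ℕ) n = (g : Equiv.Perm ℕ) n := by
      intro n
      have hmem : h ∈ (cosetMG G g n).1 :=
        Set.mem_iInter₂.1 hh (cosetMG G g n) (cosetMG_mem_Phi G g n)
      exact leftCoset_Vsub_apply G hmem n le_rfl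
    have : h = g := Subtype.ext (Equiv.ext key)
    rw [this]; rfl
  · intro h hh
    rw [Set.mem_singleton_iff] at hh
    subst hh
    exact Set.mem_iInter₂.2 fun A hA => hA

lemma Phi_inj : Function.Injective (Phi G) := by
  intro g h e
  have h1 := Phi_iInter G g
  have h2 := Phi_iInter G h
  rw [e, h2] at h1
  exact (Set.singleton_eq_singleton_iff.1 h1).symm

lemma Phi_cont : @Continuous G (FFG G) _ (ffTopG G) (Phi G) := by
  apply continuous_generateFrom_iff.2
  rintro s ⟨A, rfl⟩
  have : Phi G ⁻¹' {x : FFG G | A ∈ x.1} = A.1 := rfl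
  rw [this]
  obtain ⟨U, hU, c, hc⟩ := A.2
  rw [hc]
  exact coset_isOpen G hU c

lemma Phi_image_coset (c : G) (n : ℕ) (hsurj : Function.Surjective (Phi G)) :
    Phi G '' (cosetMG G c n).1 = {x : FFG G | cosetMG G c n ∈ x.1} := by
  apply Set.eq_of_subset_of_subset
  · rintro y ⟨h, hh, rfl⟩
    exact hh
  · intro y hy
    obtain ⟨h, rfl⟩ := hsurj y
    exact ⟨h, hy, rfl⟩

lemma Phi_isOpenMap (hclosed : IsClosed (G : Set (Equiv.Perm ℕ))) :
    @IsOpenMap G (FFG G) _ (ffTopG G) (Phi G) := by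
  letI := ffTopG G
  intro O hO
  have hsurj : Function.Surjective (Phi G) := fun x =>
    Phi_surj G hclosed x
  have himg : Phi G '' O = ⋃ g ∈ O, ⋃ n ∈ {n : ℕ |
      (fun u => g * u) '' ((Vsub G n : Subgroup G) : Set G) ⊆ O},
      {x : FFG G | cosetMG G g n ∈ x.1} := by
    apply Set.eq_of_subset_of_subset
    · rintro y ⟨g, hg, rfl⟩
      obtain ⟨n, hn⟩ := open_contains_coset G hO hg
      refine Set.mem_biUnion hg ?_
      exact Set.mem_biUnion hn (cosetMG_mem_Phi G g n)
    · intro y hy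
      obtain ⟨g, hg, hy2⟩ := Set.mem_iUnion₂.1 hy
      obtain ⟨n, hn, hy3⟩ := Set.mem_iUnion₂.1 hy2
      obtain ⟨h, rfl⟩ := hsurj y
      have : h ∈ (cosetMG G g n).1 := hy3
      exact ⟨h, hn this, rfl⟩
  rw [himg]
  refine isOpen_biUnion fun g _ => isOpen_biUnion fun n _ => ?_
  exact TopologicalSpace.isOpen_generateFrom_of_mem ⟨cosetMG G g n, rfl⟩

lemma Phi_mul (g h : G) : (Phi G (g * h)).1 = fprodG G (Phi G g).1 (Phi G h).1 := by
  apply Set.eq_of_subset_of_subset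
  · intro C hC
    have hghC : g * h ∈ C.1 := hC
    obtain ⟨U, hU, c, hCc⟩ := C.2
    refine ⟨⟨(fun u => g * u) '' ((conjSub G h U : Subgroup G) : Set G),
      conjSub G h U, conjSub_isOpen G hU, g, rfl⟩, ?_, 
      ⟨(fun u => h * u) '' (U : Set G), U, hU, h, rfl⟩, ⟨1, one_mem U, mul_one h⟩, ?_⟩
    · exact ⟨1, one_mem _, mul_one g⟩
    · rintro p ⟨v, hv, rfl⟩ q ⟨u, hu, rfl⟩
      rw [SetLike.mem_coe, mem_conjSub G] at hv
      have he : (g * v) * (h * u) = (g * h) * ((h⁻¹ * v * h) * u) := by group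
      rw [hCc] at hghC ⊢
      rw [he]
      exact coset_mul_mem G hghC (mul_mem hv hu)
  · rintro C ⟨A, hA, B, hB, hAB⟩
    exact hAB g hA h hB

/-- for a closed subgroup `G ≤ S∞` with only countably many open subgroups,
the map `Φ(g) = {A : g ∈ A}` is a group isomorphism and homeomorphism from `G` onto
`F(M(G))`, whose inverse sends a full filter `x` to the unique `g` with `⋂x = {g}`. -/
theorem stmt9 (hclosed : IsClosed (G : Set (Equiv.Perm ℕ)))
    (hcount : {U : Subgroup G | IsOpen (U : Set G)}.Countable) :
    ∃ Φ : G → FFG G,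
      (∀ g : G, (Φ g).1 = {A : MG G | g ∈ A.1}) ∧
      (@IsHomeomorph G (FFG G) _ (ffTopG G) Φ) ∧
      (∀ g h : G, (Φ (g * h)).1 = fprodG G (Φ g).1 (Φ h).1) ∧
      (∀ x : FFG G, ∀ g : G, Φ g = x ↔ (⋂ A ∈ x.1, (A.1 : Set G)) = {g}) := by
  refine ⟨Phi G, fun g => rfl, ?_, Phi_mul G, ?_⟩
  · exact @IsHomeomorph.mk G (FFG G) _ (ffTopG G) (Phi G) (Phi_cont G)
      (Phi_isOpenMap G hclosed) ⟨Phi_inj G, fun x => Phi_surj G hclosed x⟩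
  · intro x g
    constructor
    · rintro rfl
      exact Phi_iInter G g
    · intro he
      obtain ⟨h, rfl⟩ := Phi_surj G hclosed x
      have h2 := Phi_iInter G h
      rw [he] at h2
      rw [Set.singleton_eq_singleton_iff] at h2
      rw [h2]

end CoarseS
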